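/- Let (p_l)_{l≥0} be nonnegative reals with ∑ p_l = 1, finite mean m = ∑ l p_l and finite variance D > 0, and let L be an index maximizing p_l. Then |L - m| ≤ (3D)^{3/4}. -/

import Mathlib

open Finset Function

private lemma sum_cube_ident (K : ℕ) :
    (∑ j ∈ Finset.range K, ((2*(j:ℝ)+1)*((j:ℝ)+1))) = (K:ℝ)*((K:ℝ)+1)*(4*(K:ℝ)-1)/6 := by
  induction K with
  | zero => simp
  | succ n ih =>
    rw [Finset.sum_range_succ, ih]
    push_cast
    ring

private lemma exists_small_finset (m : ℝ) (hm0 : 0 ≤ m) (j : ℕ) :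
    ∃ S : Finset ℕ, S.card ≤ j ∧ ∀ l : ℕ, l ∈ S ↔ |(l:ℝ) - m| < (j:ℝ)/2 := by
  classical
  set S : Finset ℕ := (Finset.range (⌈m⌉₊ + j)).filter (fun l => |(l:ℝ) - m| < (j:ℝ)/2) with hSdef
  refine ⟨S, ?_, ?_⟩
  · have hsub : ∀ l : ℕ, l ∈ S →
        ((l:ℤ) ∈ Finset.Icc ⌈m - (j:ℝ)/2⌉ (⌈m - (j:ℝ)/2⌉ + j - 1)) := by
      intro l hl
      rw [hSdef] at hl
      simp only [Finset.mem_filter, Finset.mem_range] at hl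
      obtain ⟨-, habs⟩ := hl
      rw [abs_lt] at habs
      rw [Finset.mem_Icc]
      constructor
      · apply Int.ceil_le.mpr
        push_cast
        linarith [habs.2]
      · have h2 : (l:ℤ) < ⌈(m - (j:ℝ)/2) + ((j:ℤ):ℝ)⌉ := by
          apply Int.lt_ceil.mpr
          push_cast
          linarith [habs.1]
        rw [Int.ceil_add_intCast] at h2
        omega
    have hcard := Finset.card_le_card_of_injOn (fun l : ℕ => (l:ℤ)) hsub
      (fun x _ y _ h => Nat.cast_injective h)
    rw [Int.card_Icc] at hcard
    omega
  · intro l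
    rw [hSdef]
    simp only [Finset.mem_filter, Finset.mem_range]
    constructor
    · exact fun h => h.2
    · intro h
      refine ⟨?_, h⟩
      rw [abs_lt] at h
      have h1 : (l:ℝ) < (↑(⌈m⌉₊ + j) : ℝ) := by
        push_cast
        have := Nat.le_ceil m
        have hj : (j:ℝ)/2 ≤ (j:ℝ) := half_le_self (Nat.cast_nonneg j)
        linarith [h.2]
      exact_mod_cast h1

private lemma bathtub (p : ℕ → ℝ) (hp : ∀ l, 0 ≤ p l) (hsum : HasSum p 1)
    (m D : ℝ) (hD : HasSum (fun l : ℕ => ((l : ℝ) - m) ^ 2 * p l) D)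
    (hm0 : 0 ≤ m) (q : ℝ) (hq : ∀ l, p l ≤ q) (K : ℕ) :
    6*(K:ℝ)^2 ≤ q * ((K:ℝ)*((K:ℝ)+1)*(4*(K:ℝ)-1)) + 24*D := by
  classical
  choose S hScard hSmem using fun j => exists_small_finset m hm0 j
  set F : ℕ → ℕ → ℝ := fun j l => if l ∈ S (j+1) then p l else 0 with hF
  have hF0 : ∀ j l, 0 ≤ F j l := by
    intro j l
    rw [hF]
    dsimp only
    split
    · exact hp l
    · exact le_rfl
  have hFsum : ∀ j : ℕ, HasSum (F j) (∑ l ∈ S (j+1), p l) := by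
    intro j
    have h0 : ∀ l ∉ S (j+1), F j l = 0 := by
      intro l hl
      rw [hF]
      exact if_neg hl
    have h1 : HasSum (F j) (∑ l ∈ S (j+1), F j l) := hasSum_sum_of_ne_finset_zero h0
    have h2 : (∑ l ∈ S (j+1), F j l) = ∑ l ∈ S (j+1), p l :=
      Finset.sum_congr rfl (fun l hl => by rw [hF]; exact if_pos hl)
    rwa [h2] at h1
  -- pointwise key inequality
  have key : ∀ (N : ℕ) (l : ℕ),
      (N:ℝ)^2/4 * p l - ∑ j ∈ Finset.range N, ((2*(j:ℝ)+1)/4) * F j l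
      ≤ ((l:ℝ) - m)^2 * p l := by
    intro N l
    induction N with
    | zero => simpa using mul_nonneg (sq_nonneg ((l:ℝ) - m)) (hp l)
    | succ n ih =>
      rw [Finset.sum_range_succ]
      by_cases hmem : l ∈ S (n+1)
      · have hFl : F n l = p l := by rw [hF]; exact if_pos hmem
        rw [hFl]
        push_cast
        push_cast at ih
        nlinarith [ih]
      · have hfar : ((n:ℝ)+1)/2 ≤ |(l:ℝ) - m| := by
          by_contra hcon
          push_neg at hcon
          apply hmem
          apply (hSmem (n+1) l).mpr
          push_cast
          linarith
        have h2 : (((n:ℝ)+1)/2)^2 ≤ ((l:ℝ)-m)^2 := by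
          rw [← sq_abs ((l:ℝ)-m)]
          exact pow_le_pow_left₀ (by positivity) hfar 2
        have hFl : F n l = 0 := by rw [hF]; exact if_neg hmem
        rw [hFl]
        have hSig : 0 ≤ ∑ j ∈ Finset.range n, ((2*(j:ℝ)+1)/4) * F j l :=
          Finset.sum_nonneg (fun j _ => mul_nonneg (by positivity) (hF0 j l))
        have h3 : (((n:ℝ)+1)^2/4) * p l ≤ ((l:ℝ)-m)^2 * p l := by
          apply mul_le_mul_of_nonneg_right _ (hp l)
          nlinarith [h2]
        push_cast
        nlinarith [h3, hSig]
  have hG : HasSum (fun l => (K:ℝ)^2/4 * p l - ∑ j ∈ Finset.range K, ((2*(j:ℝ)+1)/4) * F j l)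
      ((K:ℝ)^2/4 * 1 - ∑ j ∈ Finset.range K, ((2*(j:ℝ)+1)/4) * (∑ l ∈ S (j+1), p l)) :=
    (hsum.mul_left _).sub (hasSum_sum (fun j _ => (hFsum j).mul_left _))
  have hmain := hasSum_le (key K) hG hD
  have hq0 : 0 ≤ q := le_trans (hp 0) (hq 0)
  have hsb : ∀ j ∈ Finset.range K,
      ((2*(j:ℝ)+1)/4) * (∑ l ∈ S (j+1), p l) ≤ ((2*(j:ℝ)+1)*((j:ℝ)+1)) * (q/4) := by
    intro j _
    have h1 : ∑ l ∈ S (j+1), p l ≤ (S (j+1)).card • q :=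
      Finset.sum_le_card_nsmul _ _ _ (fun l _ => hq l)
    rw [nsmul_eq_mul] at h1
    have h2 : ((S (j+1)).card : ℝ) * q ≤ ((j:ℝ)+1) * q := by
      apply mul_le_mul_of_nonneg_right _ hq0
      have := hScard (j+1)
      exact_mod_cast Nat.cast_le.mpr this
    have h3 : ∑ l ∈ S (j+1), p l ≤ ((j:ℝ)+1) * q := le_trans h1 h2
    have hc : (0:ℝ) ≤ (2*(j:ℝ)+1)/4 := by positivity
    calc ((2*(j:ℝ)+1)/4) * (∑ l ∈ S (j+1), p l) ≤ ((2*(j:ℝ)+1)/4) * (((j:ℝ)+1) * q) :=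
          mul_le_mul_of_nonneg_left h3 hc
      _ = ((2*(j:ℝ)+1)*((j:ℝ)+1)) * (q/4) := by ring
  have hSigle : ∑ j ∈ Finset.range K, ((2*(j:ℝ)+1)/4) * (∑ l ∈ S (j+1), p l)
      ≤ ((K:ℝ)*((K:ℝ)+1)*(4*(K:ℝ)-1)/6) * (q/4) := by
    calc ∑ j ∈ Finset.range K, ((2*(j:ℝ)+1)/4) * (∑ l ∈ S (j+1), p l)
        ≤ ∑ j ∈ Finset.range K, ((2*(j:ℝ)+1)*((j:ℝ)+1)) * (q/4) := Finset.sum_le_sum hsb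
      _ = (∑ j ∈ Finset.range K, ((2*(j:ℝ)+1)*((j:ℝ)+1))) * (q/4) := by
          rw [Finset.sum_mul]
      _ = ((K:ℝ)*((K:ℝ)+1)*(4*(K:ℝ)-1)/6) * (q/4) := by rw [sum_cube_ident]
  nlinarith [hmain, hSigle]

section
variable (p : ℕ → ℝ) (m D : ℝ)

private lemma offmass (hp : ∀ l, 0 ≤ p l) (hsum : HasSum p 1)
    (hD : HasSum (fun l : ℕ => ((l : ℝ) - m) ^ 2 * p l) D)
    (a : ℕ) (c : ℝ) (hc : 0 ≤ c) (hfar : ∀ l : ℕ, l ≠ a → c ≤ |(l:ℝ) - m|) :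
    c^2 * (1 - p a) ≤ D := by
  classical
  have h1 : HasSum (fun l => c^2 * Function.update p a 0 l) (c^2 * (0 - p a + 1)) :=
    (hsum.update a 0).mul_left _
  have h2 : ∀ l : ℕ, c^2 * Function.update p a 0 l ≤ ((l:ℝ) - m)^2 * p l := by
    intro l
    by_cases hl : l = a
    · rw [hl, Function.update_self]
      have : (0:ℝ) ≤ ((a:ℝ) - m)^2 * p a := mul_nonneg (sq_nonneg _) (hp a)
      linarith
    · rw [Function.update_of_ne hl]
      apply mul_le_mul_of_nonneg_right _ (hp l)
      calc c^2 ≤ |(l:ℝ)-m|^2 := pow_le_pow_left₀ hc (hfar l hl) 2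
        _ = ((l:ℝ)-m)^2 := sq_abs _
  have h3 := hasSum_le h2 h1 hD
  nlinarith [h3]

private lemma mean_zero (hsum : HasSum p 1)
    (hm : HasSum (fun l : ℕ => (l : ℝ) * p l) m) :
    HasSum (fun l : ℕ => ((l:ℝ) - m) * p l) 0 := by
  have h := hm.sub (hsum.mul_left m)
  have h2 : (fun l : ℕ => ((l:ℝ) - m) * p l) = fun l : ℕ => (l:ℝ)*p l - m * p l := by
    funext l; ring
  rw [h2]
  simpa using h

private lemma abs_summable (hp : ∀ l, 0 ≤ p l) (hsum : HasSum p 1)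
    (hD : HasSum (fun l : ℕ => ((l : ℝ) - m) ^ 2 * p l) D) :
    Summable (fun l : ℕ => |((l:ℝ) - m) * p l|) := by
  apply Summable.of_nonneg_of_le (fun l => abs_nonneg _)
    (f := fun l : ℕ => ((l:ℝ) - m)^2 * p l + p l)
  · intro l
    rw [abs_mul, abs_of_nonneg (hp l)]
    nlinarith [sq_nonneg (|(l:ℝ) - m| - 1), abs_nonneg ((l:ℝ) - m), hp l,
      mul_nonneg (abs_nonneg ((l:ℝ)-m)) (hp l), sq_abs ((l:ℝ) - m)]
  · exact hD.summable.add hsum.summable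

-- mean trick, single point
private lemma mean_single (hp : ∀ l, 0 ≤ p l) (hsum : HasSum p 1)
    (hm : HasSum (fun l : ℕ => (l : ℝ) * p l) m)
    (hD : HasSum (fun l : ℕ => ((l : ℝ) - m) ^ 2 * p l) D)
    (a : ℕ) (β : ℝ) (hβ0 : 0 ≤ β)
    (hfar : ∀ l : ℕ, l ≠ a → β ≤ |(l:ℝ) - m|) :
    β * (|m - (a:ℝ)| * p a) ≤ D - (m - (a:ℝ))^2 * p a := by
  classical
  set g : ℕ → ℝ := fun l => ((l:ℝ) - m) * p l with hg
  have hmean : HasSum g 0 := mean_zero p m hsum hm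
  have hup : HasSum (Function.update g a 0) (0 - g a + 0) := hmean.update a 0
  have habs : Summable (fun l => |Function.update g a 0 l|) := by
    apply Summable.of_nonneg_of_le (fun l => abs_nonneg _)
      (f := fun l : ℕ => |((l:ℝ) - m) * p l|)
    · intro l
      by_cases hl : l = a
      · subst hl; rw [Function.update_self]; simp [abs_nonneg, mul_nonneg]
      · rw [Function.update_of_ne hl]
    · exact abs_summable p m D hp hsum hD
  have ht : |0 - g a + 0| ≤ ∑' l, |Function.update g a 0 l| := by
    calc |0 - g a + 0| = ‖0 - g a + 0‖ := rfl
      _ ≤ ∑' l, ‖Function.update g a 0 l‖ := by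
          rw [← hup.tsum_eq]
          exact norm_tsum_le_tsum_norm habs
  -- compare β * |update| with updated second moment
  have hupD : HasSum (Function.update (fun l : ℕ => ((l:ℝ) - m)^2 * p l) a 0)
      (0 - ((a:ℝ) - m)^2 * p a + D) := hD.update a 0
  have hcomp : ∀ l : ℕ, β * |Function.update g a 0 l|
      ≤ Function.update (fun l : ℕ => ((l:ℝ) - m)^2 * p l) a 0 l := by
    intro l
    by_cases hl : l = a
    · subst hl; rw [Function.update_self, Function.update_self]; simp
    · rw [Function.update_of_ne hl, Function.update_of_ne hl, hg]
      dsimp only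
      rw [abs_mul, abs_of_nonneg (hp l)]
      have h1 : β * |(l:ℝ) - m| ≤ ((l:ℝ) - m)^2 := by
        have h2 := hfar l hl
        nlinarith [sq_abs ((l:ℝ) - m), abs_nonneg ((l:ℝ) - m)]
      nlinarith [hp l, mul_nonneg (abs_nonneg ((l:ℝ)-m)) (hp l)]
  have hβsum : Summable (fun l => β * |Function.update g a 0 l|) := habs.mul_left β
  have hfinal : β * ∑' l, |Function.update g a 0 l|
      ≤ 0 - ((a:ℝ) - m)^2 * p a + D := by
    rw [← tsum_mul_left]
    calc ∑' l, β * |Function.update g a 0 l|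
        ≤ ∑' l, Function.update (fun l : ℕ => ((l:ℝ) - m)^2 * p l) a 0 l :=
          Summable.tsum_le_tsum hcomp hβsum hupD.summable
      _ = 0 - ((a:ℝ) - m)^2 * p a + D := hupD.tsum_eq
  have hga : |0 - g a + 0| = |m - (a:ℝ)| * p a := by
    rw [hg]
    dsimp only
    have he : 0 - ((a:ℝ) - m) * p a + 0 = (m - (a:ℝ)) * p a := by ring
    rw [he, abs_mul, abs_of_nonneg (hp a)]
  have h5 : β * (|m - (a:ℝ)| * p a) ≤ β * ∑' l, |Function.update g a 0 l| := by
    apply mul_le_mul_of_nonneg_left _ hβ0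
    rw [← hga]; exact ht
  have h6 : ((a:ℝ) - m)^2 = (m - (a:ℝ))^2 := by ring
  nlinarith [le_trans h5 hfinal]

-- mean trick, pair of points
private lemma mean_pair (hp : ∀ l, 0 ≤ p l) (hsum : HasSum p 1)
    (hm : HasSum (fun l : ℕ => (l : ℝ) * p l) m)
    (hD : HasSum (fun l : ℕ => ((l : ℝ) - m) ^ 2 * p l) D)
    (a b : ℕ) (hab : b ≠ a)
    (hfar : ∀ l : ℕ, l ≠ a → l ≠ b → 1 ≤ |(l:ℝ) - m|) :
    |(b:ℝ) - m| * p b - |(a:ℝ) - m| * p a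
      ≤ D - ((a:ℝ) - m)^2 * p a - ((b:ℝ) - m)^2 * p b := by
  classical
  set g : ℕ → ℝ := fun l => ((l:ℝ) - m) * p l with hg
  have hmean : HasSum g 0 := mean_zero p m hsum hm
  have hup1 : HasSum (Function.update g a 0) (0 - g a + 0) := hmean.update a 0
  have hup : HasSum (Function.update (Function.update g a 0) b 0)
      (0 - (Function.update g a 0) b + (0 - g a + 0)) := hup1.update b 0
  have hgb : (Function.update g a 0) b = g b := Function.update_of_ne hab _ _
  have habs : Summable (fun l => |Function.update (Function.update g a 0) b 0 l|) := by
    apply Summable.of_nonneg_of_le (fun l => abs_nonneg _)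
      (f := fun l : ℕ => |((l:ℝ) - m) * p l|)
    · intro l
      by_cases hlb : l = b
      · subst hlb; rw [Function.update_self]; simp [abs_nonneg, mul_nonneg]
      · rw [Function.update_of_ne hlb]
        by_cases hla : l = a
        · subst hla; rw [Function.update_self]; simp [abs_nonneg, mul_nonneg]
        · rw [Function.update_of_ne hla]
    · exact abs_summable p m D hp hsum hD
  have hupD1 : HasSum (Function.update (fun l : ℕ => ((l:ℝ) - m)^2 * p l) a 0)
      (0 - ((a:ℝ) - m)^2 * p a + D) := hD.update a 0
  have hupD : HasSum (Function.update (Function.update (fun l : ℕ => ((l:ℝ) - m)^2 * p l) a 0) b 0)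
      (0 - (Function.update (fun l : ℕ => ((l:ℝ) - m)^2 * p l) a 0) b
        + (0 - ((a:ℝ) - m)^2 * p a + D)) := hupD1.update b 0
  have hupDb : (Function.update (fun l : ℕ => ((l:ℝ) - m)^2 * p l) a 0) b
      = ((b:ℝ) - m)^2 * p b := Function.update_of_ne hab _ _
  have hcomp : ∀ l : ℕ, |Function.update (Function.update g a 0) b 0 l|
      ≤ Function.update (Function.update (fun l : ℕ => ((l:ℝ) - m)^2 * p l) a 0) b 0 l := by
    intro l
    by_cases hlb : l = b
    · subst hlb; rw [Function.update_self, Function.update_self]; simp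
    · rw [Function.update_of_ne hlb, Function.update_of_ne hlb]
      by_cases hla : l = a
      · subst hla; rw [Function.update_self, Function.update_self]; simp
      · rw [Function.update_of_ne hla, Function.update_of_ne hla, hg]
        dsimp only
        rw [abs_mul, abs_of_nonneg (hp l)]
        have h2 := hfar l hla hlb
        have h1 : |(l:ℝ) - m| ≤ ((l:ℝ) - m)^2 := by
          nlinarith [sq_abs ((l:ℝ) - m), abs_nonneg ((l:ℝ) - m)]
        nlinarith [hp l, mul_nonneg (abs_nonneg ((l:ℝ)-m)) (hp l)]
  have ht : |0 - (Function.update g a 0) b + (0 - g a + 0)|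
      ≤ 0 - (Function.update (fun l : ℕ => ((l:ℝ) - m)^2 * p l) a 0) b
        + (0 - ((a:ℝ) - m)^2 * p a + D) := by
    calc |0 - (Function.update g a 0) b + (0 - g a + 0)|
        = ‖0 - (Function.update g a 0) b + (0 - g a + 0)‖ := rfl
      _ ≤ ∑' l, ‖Function.update (Function.update g a 0) b 0 l‖ := by
          rw [← hup.tsum_eq]
          exact norm_tsum_le_tsum_norm habs
      _ ≤ 0 - (Function.update (fun l : ℕ => ((l:ℝ) - m)^2 * p l) a 0) b
          + (0 - ((a:ℝ) - m)^2 * p a + D) := by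
          rw [← hupD.tsum_eq]
          exact Summable.tsum_le_tsum hcomp habs hupD.summable
  rw [hgb, hupDb] at ht
  have hlow : |g b| - |g a| ≤ |0 - g b + (0 - g a + 0)| := by
    have h1 : |g b| - |-(g a)| ≤ |g b - (-(g a))| := abs_sub_abs_le_abs_sub _ _
    rw [abs_neg] at h1
    have h2 : |g b - (-(g a))| = |0 - g b + (0 - g a + 0)| := by
      rw [← abs_neg (g b - (-(g a)))]
      congr 1
      ring
    linarith [h1, h2 ▸ h1]
  have hga : |g a| = |(a:ℝ) - m| * p a := by
    rw [hg]; dsimp only; rw [abs_mul, abs_of_nonneg (hp a)]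
  have hgbv : |g b| = |(b:ℝ) - m| * p b := by
    rw [hg]; dsimp only; rw [abs_mul, abs_of_nonneg (hp b)]
  rw [hga, hgbv] at hlow
  linarith [le_trans hlow ht]

end

set_option maxHeartbeats 1600000 in
theorem stmt_10 (p : ℕ → ℝ) (hp : ∀ l, 0 ≤ p l) (hsum : HasSum p 1)
    (m D : ℝ) (hm : HasSum (fun l : ℕ => (l : ℝ) * p l) m)
    (hD : HasSum (fun l : ℕ => ((l : ℝ) - m) ^ 2 * p l) D) (hDpos : 0 < D)
    (L : ℕ) (hL : ∀ l, p l ≤ p L) :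
    |(L : ℝ) - m| ≤ (3 * D) ^ ((3 : ℝ) / 4) := by
  classical
  have hm0 : 0 ≤ m :=
    hasSum_le (fun l => mul_nonneg (Nat.cast_nonneg l) (hp l)) hasSum_zero hm
  have hmode : ((L:ℝ) - m)^2 * p L ≤ D :=
    le_hasSum hD L (fun j _ => mul_nonneg (sq_nonneg _) (hp j))
  have hq0 : 0 ≤ p L := hp L
  have key4 : |(L:ℝ) - m|^4 ≤ 27*D^3 := by
    by_cases hD5 : 1/5 ≤ D
    · -- Regime I
      obtain ⟨K, hK2, h8, h20⟩ : ∃ K : ℕ, (2:ℝ) ≤ (K:ℝ) ∧ 8*D ≤ (K:ℝ)^2 ∧ (K:ℝ)^2 ≤ 20*D := by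
        by_cases hD2 : D ≤ 1/2
        · refine ⟨2, by norm_num, by push_cast; linarith, by push_cast; linarith⟩
        · push_neg at hD2
          refine ⟨Nat.floor (Real.sqrt (8*D)) + 1, ?_, ?_, ?_⟩
          · have hs2 : (2:ℝ) ≤ Real.sqrt (8*D) := by
              rw [show (2:ℝ) = Real.sqrt 4 by
                rw [show (4:ℝ) = 2^2 by norm_num, Real.sqrt_sq (by norm_num : (0:ℝ) ≤ 2)]]
              exact Real.sqrt_le_sqrt (by linarith)
            have hlt : Real.sqrt (8*D) < (Nat.floor (Real.sqrt (8*D)) : ℝ) + 1 :=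
              Nat.lt_floor_add_one _
            push_cast
            linarith
          · have hs : Real.sqrt (8*D) ^ 2 = 8*D := Real.sq_sqrt (by linarith)
            have hlt : Real.sqrt (8*D) < (Nat.floor (Real.sqrt (8*D)) : ℝ) + 1 :=
              Nat.lt_floor_add_one _
            have hnn : (0:ℝ) ≤ Real.sqrt (8*D) := Real.sqrt_nonneg _
            push_cast
            nlinarith
          · have hs : Real.sqrt (8*D) ^ 2 = 8*D := Real.sq_sqrt (by linarith)
            have hs2 : (2:ℝ) ≤ Real.sqrt (8*D) := by
              rw [show (2:ℝ) = Real.sqrt 4 by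
                rw [show (4:ℝ) = 2^2 by norm_num, Real.sqrt_sq (by norm_num : (0:ℝ) ≤ 2)]]
              exact Real.sqrt_le_sqrt (by linarith)
            have hle : (Nat.floor (Real.sqrt (8*D)) : ℝ) ≤ Real.sqrt (8*D) :=
              Nat.floor_le (Real.sqrt_nonneg _)
            push_cast
            nlinarith
      have hbath := bathtub p hp hsum m D hD hm0 (p L) hL K
      set k := (K:ℝ) with hk
      set δ := |(L:ℝ) - m| with hδ
      have hδ0 : 0 ≤ δ := abs_nonneg _
      have hδ2 : δ^2 = ((L:ℝ) - m)^2 := sq_abs _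
      have hA : (0:ℝ) < k*(k+1)*(4*k-1) := by nlinarith
      have hc : (0:ℝ) < 6*k^2 - 24*D := by nlinarith
      have h1 : δ^2 * (6*k^2 - 24*D) ≤ D * (k*(k+1)*(4*k-1)) := by
        have e1 : δ^2 * (6*k^2-24*D) ≤ δ^2 * (p L * (k*(k+1)*(4*k-1))) := by
          apply mul_le_mul_of_nonneg_left _ (sq_nonneg δ)
          linarith
        have e3 : (((L:ℝ)-m)^2 * p L) * (k*(k+1)*(4*k-1)) ≤ D * (k*(k+1)*(4*k-1)) :=
          mul_le_mul_of_nonneg_right hmode (le_of_lt hA)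
        nlinarith [e1, e3, hδ2]
      -- polynomial inequalities
      have hpoly1 : k^6 ≤ 32*D*(k^2-4*D)^2 := by
        have h1t : (0:ℝ) ≤ (k^2-8*D)^2*(20*D-k^2) := mul_nonneg (sq_nonneg _) (by linarith)
        have h2t : (0:ℝ) ≤ 4*D*(k^2-8*D)*(24*D-k^2) := by
          apply mul_nonneg (mul_nonneg (by linarith) (by linarith)) (by linarith)
        nlinarith [h1t, h2t]
      have hpoly2 : 8*((k+1)*(4*k-1))^2 ≤ 243*k^4 := by
        have hu : (0:ℝ) ≤ k - 2 := by linarith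
        have e : 243*k^4 - 8*((k+1)*(4*k-1))^2
            = 115*(k-2)^4 + 728*(k-2)^3 + 1600*(k-2)^2 + 1392*(k-2) + 360 := by ring
        have t1 : (0:ℝ) ≤ (k-2)^4 := by positivity
        have t2 : (0:ℝ) ≤ (k-2)^3 := pow_nonneg hu 3
        have t3 : (0:ℝ) ≤ (k-2)^2 := sq_nonneg _
        linarith
      have hA2 : (k*(k+1)*(4*k-1))^2 ≤ 972*D*(k^2-4*D)^2 := by
        have t1 : k^2*((k+1)*(4*k-1))^2 ≤ k^2*((243/8)*k^4) :=
          mul_le_mul_of_nonneg_left (by linarith) (sq_nonneg k)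
        have t2 : (243/8)*k^6 ≤ (243/8)*(32*D*(k^2-4*D)^2) := by linarith
        calc (k*(k+1)*(4*k-1))^2 = k^2*((k+1)*(4*k-1))^2 := by ring
          _ ≤ k^2*((243/8)*k^4) := t1
          _ = (243/8)*k^6 := by ring
          _ ≤ (243/8)*(32*D*(k^2-4*D)^2) := t2
          _ = 972*D*(k^2-4*D)^2 := by ring
      -- conclude δ^4 ≤ 27 D^3
      have h3 : (δ^2 * (6*k^2-24*D))^2 ≤ (D * (k*(k+1)*(4*k-1)))^2 := by
        exact pow_le_pow_left₀ (by positivity) h1 2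
      have h4 : (D * (k*(k+1)*(4*k-1)))^2 ≤ 27*D^3*(6*k^2-24*D)^2 := by
        calc (D * (k*(k+1)*(4*k-1)))^2 = D^2 * (k*(k+1)*(4*k-1))^2 := by ring
          _ ≤ D^2 * (972*D*(k^2-4*D)^2) := mul_le_mul_of_nonneg_left hA2 (sq_nonneg D)
          _ = 27*D^3*(6*k^2-24*D)^2 := by ring
      have h5 : δ^4 * (6*k^2-24*D)^2 ≤ 27*D^3 * (6*k^2-24*D)^2 := by
        calc δ^4 * (6*k^2-24*D)^2 = (δ^2 * (6*k^2-24*D))^2 := by ring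
          _ ≤ (D * (k*(k+1)*(4*k-1)))^2 := h3
          _ ≤ 27*D^3 * (6*k^2-24*D)^2 := h4
      have h6 : (0:ℝ) < (6*k^2-24*D)^2 := by positivity
      exact le_of_mul_le_mul_right h5 h6
    · -- Regime II : D < 1/5
      push_neg at hD5
      set a := Nat.floor (m + 1/2) with ha
      have ha1 : (a:ℝ) ≤ m + 1/2 := Nat.floor_le (by linarith)
      have ha2 : m + 1/2 < (a:ℝ) + 1 := Nat.lt_floor_add_one _
      set θ := |m - (a:ℝ)| with hθ
      have hθhalf : θ ≤ 1/2 := abs_le.mpr ⟨by linarith, by linarith⟩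
      have hθ0 : 0 ≤ θ := abs_nonneg _
      have hθlow : m - (a:ℝ) ≤ θ := le_abs_self _
      have hθlow2 : (a:ℝ) - m ≤ θ := by rw [hθ, abs_sub_comm]; exact le_abs_self _
      have hfar : ∀ l : ℕ, l ≠ a → 1 - θ ≤ |(l:ℝ) - m| := by
        intro l hl
        have h1 : (1:ℝ) ≤ |(l:ℝ) - (a:ℝ)| := by
          rcases Nat.lt_or_ge l a with h | h
          · have hc : (l:ℝ) + 1 ≤ (a:ℝ) := by exact_mod_cast Nat.succ_le_of_lt h
            rw [abs_sub_comm, abs_of_nonneg (by linarith : (0:ℝ) ≤ (a:ℝ) - (l:ℝ))]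
            linarith
          · have h2 : a < l := lt_of_le_of_ne h (Ne.symm hl)
            have hc : (a:ℝ) + 1 ≤ (l:ℝ) := by exact_mod_cast Nat.succ_le_of_lt h2
            rw [abs_of_nonneg (by linarith : (0:ℝ) ≤ (l:ℝ) - (a:ℝ))]
            linarith
        have htri := abs_add_le ((l:ℝ) - m) (m - (a:ℝ))
        have he : ((l:ℝ) - m) + (m - (a:ℝ)) = (l:ℝ) - (a:ℝ) := by ring
        rw [he] at htri
        have habs2 : |m - (a:ℝ)| = θ := rfl
        linarith [htri, h1, le_abs_self (m - (a:ℝ))]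
      have hbath2 := bathtub p hp hsum m D hD hm0 (p L) hL 2
      have hq27 : (4 - 4*D)/7 ≤ p L := by norm_num at hbath2; linarith
      by_cases hLa : L = a
      · -- case L = a : use mean trick
        have hms := mean_single p m D hp hsum hm hD a (1-θ) (by linarith) hfar
        have hsq : (m - (a:ℝ))^2 = θ^2 := by rw [hθ, sq_abs]
        have habsm : |m - (a:ℝ)| = θ := rfl
        rw [habsm, hsq] at hms
        have hθpa : θ * p a ≤ D := by
          have hexp : θ * p a = (1-θ)*(θ * p a) + θ^2 * p a := by ring
          linarith [hms]
        have hLm : |(L:ℝ) - m| = θ := by rw [hLa, abs_sub_comm, ← hθ]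
        rw [hLm]
        have hpaL : p a = p L := by rw [hLa]
        have h2 : θ * (4 - 4*D) ≤ 7*D := by
          have h1 : θ * ((4 - 4*D)/7) ≤ θ * p a := by
            rw [hpaL]
            exact mul_le_mul_of_nonneg_left hq27 hθ0
          linarith
        have hθb0 : (0:ℝ) ≤ θ * (4 - 4*D) := mul_nonneg hθ0 (by linarith)
        have h3 : (θ * (4 - 4*D))^4 ≤ (7*D)^4 := pow_le_pow_left₀ hθb0 h2 4
        have hb : (16:ℝ)/5 ≤ 4 - 4*D := by linarith
        have hb4 : ((16:ℝ)/5)^4 ≤ (4 - 4*D)^4 := pow_le_pow_left₀ (by norm_num) hb 4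
        have hnum : 2401 * D ≤ 27 * (4 - 4*D)^4 := by
          have : (2401:ℝ) * D ≤ 2401 * (1/5) := by linarith
          nlinarith [hb4]
        have h5 : (7*D)^4 ≤ 27*D^3 * (4 - 4*D)^4 := by
          have := mul_le_mul_of_nonneg_left hnum (by positivity : (0:ℝ) ≤ D^3)
          nlinarith [this]
        have h6 : θ^4 * (4 - 4*D)^4 ≤ 27*D^3 * (4 - 4*D)^4 := by
          calc θ^4 * (4 - 4*D)^4 = (θ * (4 - 4*D))^4 := by ring
            _ ≤ (7*D)^4 := h3
            _ ≤ 27*D^3 * (4 - 4*D)^4 := h5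
        have h7 : (0:ℝ) < (4 - 4*D)^4 := by positivity
        exact le_of_mul_le_mul_right h6 h7
      · -- case L ≠ a : impossible
        exfalso
        have hoff := offmass p m D hp hsum hD a (1-θ) (by linarith) hfar
        have hpa1 : p a ≤ 1 := le_hasSum hsum a (fun j _ => hp j)
        have h14' : (1/4:ℝ) ≤ (1-θ)^2 := by nlinarith [hθhalf, hθ0]
        have hpa : 1 - 4*D ≤ p a := by
          have hmm := mul_le_mul_of_nonneg_right h14' (by linarith : (0:ℝ) ≤ 1 - p a)
          linarith
        have hq : 1 - 4*D ≤ p L := le_trans hpa (hL a)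
        have hδlt1 : |(L:ℝ) - m| < 1 := by
          by_contra hge
          push_neg at hge
          have h1 : (1:ℝ) ≤ ((L:ℝ)-m)^2 := by nlinarith [sq_abs ((L:ℝ)-m), hge]
          have h2 : p L ≤ ((L:ℝ)-m)^2 * p L := by nlinarith [hp L, h1]
          linarith [hmode, hq]
        have habslt := abs_lt.mp hδlt1
        have hkey : (|(L:ℝ) - m| = 1 - θ) ∧ (∀ l : ℕ, l ≠ a → l ≠ L → 1 ≤ |(l:ℝ) - m|) := by
          rcases le_or_gt (a:ℝ) m with hma | hma
          · -- a ≤ m, so L = a+1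
            have hθeq : θ = m - (a:ℝ) := by rw [hθ, abs_of_nonneg (by linarith)]
            have hL1 : L < a + 2 := by
              have : (L:ℝ) < (a:ℝ) + 2 := by linarith [habslt.2]
              exact_mod_cast this
            have hL2 : a ≤ L := by
              have : (a:ℝ) < (L:ℝ) + 1 := by linarith [habslt.1]
              have h2 : a < L + 1 := by exact_mod_cast this
              omega
            have hLb : L = a + 1 := by omega
            constructor
            · rw [hLb]
              push_cast
              rw [abs_of_nonneg (by linarith)]
              linarith
            · intro l h1 h2
              have hcase : l < a ∨ a + 2 ≤ l := by omega
              rcases hcase with hc | hc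
              · have hcc : (l:ℝ) + 1 ≤ (a:ℝ) := by exact_mod_cast Nat.succ_le_of_lt hc
                have : (1:ℝ) ≤ m - (l:ℝ) := by linarith
                calc (1:ℝ) ≤ m - (l:ℝ) := this
                  _ ≤ |m - (l:ℝ)| := le_abs_self _
                  _ = |(l:ℝ) - m| := abs_sub_comm _ _
              · have hcc : (a:ℝ) + 2 ≤ (l:ℝ) := by exact_mod_cast hc
                have : (1:ℝ) ≤ (l:ℝ) - m := by linarith
                calc (1:ℝ) ≤ (l:ℝ) - m := this
                  _ ≤ |(l:ℝ) - m| := le_abs_self _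
          · -- m < a, so L = a-1
            have hθeq : θ = (a:ℝ) - m := by
              rw [hθ, abs_of_nonpos (by linarith)]; ring
            have hapos : 1 ≤ a := by
              by_contra hc
              push_neg at hc
              interval_cases a
              · simp at hma; linarith
            have hL1 : L ≤ a := by
              have : (L:ℝ) < (a:ℝ) + 1 := by linarith [habslt.2]
              have h2 : L < a + 1 := by exact_mod_cast this
              omega
            have hL2 : a ≤ L + 1 := by
              have : (a:ℝ) < (L:ℝ) + 2 := by linarith [habslt.1]
              have h2 : a < L + 2 := by exact_mod_cast this
              omega
            have hLb : L = a - 1 := by omega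
            have hLcast : (L:ℝ) = (a:ℝ) - 1 := by
              rw [hLb]
              have : ((a - 1 : ℕ):ℝ) = (a:ℝ) - 1 := by
                have := Nat.cast_sub hapos (R := ℝ)
                simpa using this
              rw [this]
            constructor
            · rw [hLcast, abs_of_nonpos (by linarith)]
              linarith
            · intro l h1 h2
              have hl2 : l ≠ a - 1 := fun hcon => h2 (by omega)
              have hcase : l + 2 ≤ a ∨ a + 1 ≤ l := by omega
              rcases hcase with hc | hc
              · have hcc : (l:ℝ) + 2 ≤ (a:ℝ) := by exact_mod_cast hc
                have : (1:ℝ) ≤ m - (l:ℝ) := by linarith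
                calc (1:ℝ) ≤ m - (l:ℝ) := this
                  _ ≤ |m - (l:ℝ)| := le_abs_self _
                  _ = |(l:ℝ) - m| := abs_sub_comm _ _
              · have hcc : (a:ℝ) + 1 ≤ (l:ℝ) := by exact_mod_cast hc
                have : (1:ℝ) ≤ (l:ℝ) - m := by linarith
                calc (1:ℝ) ≤ (l:ℝ) - m := this
                  _ ≤ |(l:ℝ) - m| := le_abs_self _
        obtain ⟨hLmval, hfar2⟩ := hkey
        have hpair := mean_pair p m D hp hsum hm hD a L (Ne.symm ?_) hfar2
        swap
        · exact fun h => hLa h.symm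
        have habsam : |(a:ℝ) - m| = θ := by rw [hθ, abs_sub_comm]
        have hsqa : ((a:ℝ) - m)^2 = θ^2 := by
          rw [← sq_abs ((a:ℝ) - m), habsam]
        have hsqL : ((L:ℝ) - m)^2 = (1-θ)^2 := by
          rw [← sq_abs ((L:ℝ) - m), hLmval]
        rw [habsam, hsqa, hsqL, hLmval] at hpair
        -- hpair : (1-θ) * p L - θ * p a ≤ D - θ^2 * p a - (1-θ)^2 * p L
        have hmul : (0:ℝ) ≤ θ * (1-θ) * (p L - p a) :=
          mul_nonneg (mul_nonneg hθ0 (by linarith)) (sub_nonneg.mpr (hL a))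
        have h2q : 2*(1-θ)^2 * p L ≤ D := by nlinarith [hpair, hmul]
        have h14 : (1/4:ℝ) ≤ (1-θ)^2 := by nlinarith [hθhalf, hθ0]
        have hfin : (1/4:ℝ) * ((4 - 4*D)/7) ≤ (1-θ)^2 * p L :=
          mul_le_mul h14 hq27 (by linarith) (sq_nonneg _)
        linarith
  -- conclude from key4
  have h3D : (0:ℝ) < 3*D := by linarith
  by_contra hcon
  push_neg at hcon
  have h2 : ((3*D) ^ ((3:ℝ)/4))^4 < |(L:ℝ)-m|^4 :=
    pow_lt_pow_left₀ hcon (Real.rpow_nonneg (le_of_lt h3D) _) (by norm_num)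
  have h3 : ((3*D) ^ ((3:ℝ)/4))^(4:ℕ) = 27*D^3 := by
    rw [← Real.rpow_natCast ((3*D) ^ ((3:ℝ)/4)) 4, ← Real.rpow_mul (le_of_lt h3D)]
    norm_num
    ring
  rw [h3] at h2
  linarith
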